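/- Let f : I → I be continuous on a compact interval and let J, K be closed subintervals with f(J) ⊇ K ∪ J and f(K) ⊇ J. Then for every even integer n ≥ 2 there exists a point y with f^n(y) = y whose itinerary follows a cycle alternating between J and K as prescribed; in particular if J and K have disjoint interiors and intersect in at most one point which is not periodic of period dividing n, f has a periodic point of least period n for every even n. -/

import Mathlib

open Set Function

private lemma subA (f : ℝ → ℝ) {u v p q : ℝ} (huv : u ≤ v)
    (hf : ContinuousOn f (Icc u v)) (hu : f u = p) (hv : f v = q) (hpq : p ≤ q) :
    ∃ c' d', u ≤ c' ∧ c' ≤ d' ∧ d' ≤ v ∧ f '' Icc c' d' = Icc p q := by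
  set T : Set ℝ := Icc u v ∩ f ⁻¹' {q} with hT
  have hTc : IsClosed T := hf.preimage_isClosed_of_isClosed isClosed_Icc isClosed_singleton
  have hTne : T.Nonempty := ⟨v, right_mem_Icc.2 huv, by simpa using hv⟩
  have hTbdd : BddBelow T := ⟨u, fun x hx => hx.1.1⟩
  set d' := sInf T with hd'def
  have hd'T : d' ∈ T := hTc.csInf_mem hTne hTbdd
  have hd'min : ∀ x ∈ T, d' ≤ x := fun x hx => csInf_le hTbdd hx
  have hfd' : f d' = q := hd'T.2
  have hud' : u ≤ d' := hd'T.1.1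
  have hd'v : d' ≤ v := hd'T.1.2
  set S : Set ℝ := Icc u d' ∩ f ⁻¹' {p} with hS
  have hSc : IsClosed S :=
    (hf.mono (Icc_subset_Icc_right hd'v)).preimage_isClosed_of_isClosed isClosed_Icc
      isClosed_singleton
  have hSne : S.Nonempty := ⟨u, left_mem_Icc.2 hud', by simpa using hu⟩
  have hSbdd : BddAbove S := ⟨d', fun x hx => hx.1.2⟩
  set c' := sSup S with hc'def
  have hc'S : c' ∈ S := hSc.csSup_mem hSne hSbdd
  have hc'max : ∀ x ∈ S, x ≤ c' := fun x hx => le_csSup hSbdd hx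
  have hfc' : f c' = p := hc'S.2
  have huc' : u ≤ c' := hc'S.1.1
  have hc'd' : c' ≤ d' := hc'S.1.2
  have hcont : ContinuousOn f (Icc c' d') := hf.mono (Icc_subset_Icc huc' hd'v)
  refine ⟨c', d', huc', hc'd', hd'v, ?_⟩
  apply Subset.antisymm
  · rintro _ ⟨x, hx, rfl⟩
    constructor
    · by_contra h
      push_neg at h
      have hivt := intermediate_value_Icc hx.2 (hcont.mono (Icc_subset_Icc hx.1 le_rfl))
      have hmem : p ∈ Icc (f x) (f d') := by rw [hfd']; exact ⟨h.le, hpq⟩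
      obtain ⟨z, hz, hfz⟩ := hivt hmem
      have hzS : z ∈ S := ⟨⟨le_trans huc' (le_trans hx.1 hz.1), hz.2⟩, hfz⟩
      have h1 : z ≤ c' := hc'max z hzS
      have hxz : x = z := le_antisymm hz.1 (le_trans h1 hx.1)
      rw [← hxz] at hfz
      linarith
    · by_contra h
      push_neg at h
      have hivt := intermediate_value_Icc hx.1 (hcont.mono (Icc_subset_Icc le_rfl hx.2))
      have hmem : q ∈ Icc (f c') (f x) := by rw [hfc']; exact ⟨hpq, h.le⟩
      obtain ⟨z, hz, hfz⟩ := hivt hmem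
      have hzT : z ∈ T := ⟨⟨le_trans huc' hz.1, le_trans hz.2 (le_trans hx.2 hd'v)⟩, hfz⟩
      have h1 : d' ≤ z := hd'min z hzT
      have hxz : x = z := le_antisymm (le_trans hx.2 h1) hz.2
      rw [← hxz] at hfz
      linarith
  · have h := intermediate_value_Icc hc'd' hcont
    rw [hfc', hfd'] at h
    exact h

private lemma subA' (f : ℝ → ℝ) {u v p q : ℝ} (huv : u ≤ v)
    (hf : ContinuousOn f (Icc u v)) (hu : f u = q) (hv : f v = p) (hpq : p ≤ q) :
    ∃ c' d', u ≤ c' ∧ c' ≤ d' ∧ d' ≤ v ∧ f '' Icc c' d' = Icc p q := by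
  have hneg : ∀ x ∈ Icc (-v) (-u), -x ∈ Icc u v := by
    intro x hx
    exact ⟨by linarith [hx.2], by linarith [hx.1]⟩
  have hg : ContinuousOn (fun x => f (-x)) (Icc (-v) (-u)) :=
    hf.comp (continuous_neg.continuousOn) hneg
  obtain ⟨c', d', h1, h2, h3, h4⟩ :=
    subA (fun x => f (-x)) (neg_le_neg huv) hg (by simpa using hv) (by simpa using hu) hpq
  refine ⟨-d', -c', by linarith, by linarith, by linarith, ?_⟩
  rw [← h4]
  rw [show Icc (-d') (-c') = Neg.neg '' Icc c' d' by rw [Set.image_neg_Icc]]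
  rw [← Set.image_comp]
  rfl

private lemma subB (f : ℝ → ℝ) {c d p q : ℝ} (hcd : c ≤ d)
    (hf : ContinuousOn f (Icc c d)) (hpq : p ≤ q) (hcov : Icc p q ⊆ f '' Icc c d) :
    ∃ c' d', c ≤ c' ∧ c' ≤ d' ∧ d' ≤ d ∧ f '' Icc c' d' = Icc p q := by
  obtain ⟨s, hs, hfs⟩ := hcov (left_mem_Icc.2 hpq)
  obtain ⟨t, ht, hft⟩ := hcov (right_mem_Icc.2 hpq)
  rcases le_total s t with hst | hts
  · obtain ⟨c', d', h1, h2, h3, h4⟩ :=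
      subA f hst (hf.mono (Icc_subset_Icc hs.1 ht.2)) hfs hft hpq
    exact ⟨c', d', le_trans hs.1 h1, h2, le_trans h3 ht.2, h4⟩
  · obtain ⟨c', d', h1, h2, h3, h4⟩ :=
      subA' f hts (hf.mono (Icc_subset_Icc ht.1 hs.2)) hft hfs hpq
    exact ⟨c', d', le_trans ht.1 h1, h2, le_trans h3 hs.2, h4⟩

private lemma fixlem (g : ℝ → ℝ) {u v : ℝ} (huv : u ≤ v)
    (hg : ContinuousOn g (Icc u v)) (him : Icc u v ⊆ g '' Icc u v) :
    ∃ y ∈ Icc u v, g y = y := by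
  obtain ⟨s, hs, hgs⟩ := him (left_mem_Icc.2 huv)
  obtain ⟨t, ht, hgt⟩ := him (right_mem_Icc.2 huv)
  have hsub : uIcc s t ⊆ Icc u v := by
    rw [← uIcc_of_le huv]
    exact uIcc_subset_uIcc (by rw [uIcc_of_le huv]; exact hs) (by rw [uIcc_of_le huv]; exact ht)
  have hcont : ContinuousOn (fun x => g x - x) (uIcc s t) :=
    (hg.mono hsub).sub continuousOn_id
  have h0 : (0 : ℝ) ∈ uIcc (g s - s) (g t - t) := by
    apply Set.mem_uIcc.2
    left
    constructor <;> [rw [hgs]; rw [hgt]] <;> [linarith [hs.1]; linarith [ht.2]]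
  obtain ⟨y, hy, hy0⟩ := intermediate_value_uIcc hcont h0
  exact ⟨y, hsub hy, by dsimp at hy0; linarith⟩

private lemma contIter (f : ℝ → ℝ) {a b : ℝ} (hf : ContinuousOn f (Icc a b))
    (hmaps : MapsTo f (Icc a b) (Icc a b)) :
    ∀ k, ContinuousOn f^[k] (Icc a b) ∧ MapsTo f^[k] (Icc a b) (Icc a b) := by
  intro k
  induction k with
  | zero => exact ⟨continuousOn_id, fun x hx => by simpa using hx⟩
  | succ k ih =>
    rw [Function.iterate_succ']
    exact ⟨hf.comp ih.1 ih.2, hmaps.comp ih.2⟩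

private lemma chain (f : ℝ → ℝ) {a b : ℝ} (hf : ContinuousOn f (Icc a b))
    (hmaps : MapsTo f (Icc a b) (Icc a b)) (P Q : ℕ → ℝ) (hPQ : ∀ i, P i ≤ Q i)
    (hsub : ∀ i, Icc (P i) (Q i) ⊆ Icc a b)
    (hcov : ∀ i, Icc (P (i + 1)) (Q (i + 1)) ⊆ f '' Icc (P i) (Q i)) :
    ∀ k, ∃ u v, u ≤ v ∧ (∀ i ≤ k, f^[i] '' Icc u v ⊆ Icc (P i) (Q i)) ∧
      f^[k] '' Icc u v = Icc (P k) (Q k) := by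
  intro k
  induction k with
  | zero =>
    exact ⟨P 0, Q 0, hPQ 0, fun i hi => by simp [Nat.le_zero.1 hi], by simp⟩
  | succ k ih =>
    obtain ⟨u, v, huv, hall, heq⟩ := ih
    have h00 := hall 0 (Nat.zero_le k)
    rw [Function.iterate_zero, Set.image_id] at h00
    have huvab : Icc u v ⊆ Icc a b := h00.trans (hsub 0)
    have hcont : ContinuousOn f^[k + 1] (Icc u v) :=
      ((contIter f hf hmaps (k + 1)).1).mono huvab
    have himg : Icc (P (k + 1)) (Q (k + 1)) ⊆ f^[k + 1] '' Icc u v := by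
      rw [Function.iterate_succ', Set.image_comp, heq]
      exact hcov k
    obtain ⟨u', v', h1, h2, h3, h4⟩ := subB f^[k + 1] huv hcont (hPQ (k + 1)) himg
    have hinc : Icc u' v' ⊆ Icc u v := Icc_subset_Icc h1 h3
    refine ⟨u', v', h2, ?_, h4⟩
    intro i hi
    by_cases h : i ≤ k
    · exact (Set.image_mono hinc).trans (hall i h)
    · have : i = k + 1 := by omega
      subst this
      rw [h4]

private lemma cycle (f : ℝ → ℝ) {a b : ℝ} (hf : ContinuousOn f (Icc a b))
    (hmaps : MapsTo f (Icc a b) (Icc a b)) (P Q : ℕ → ℝ) (hPQ : ∀ i, P i ≤ Q i)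
    (hsub : ∀ i, Icc (P i) (Q i) ⊆ Icc a b)
    (hcov : ∀ i, Icc (P (i + 1)) (Q (i + 1)) ⊆ f '' Icc (P i) (Q i))
    (n : ℕ) (hP : P n = P 0) (hQ : Q n = Q 0) :
    ∃ y, f^[n] y = y ∧ ∀ i ≤ n, f^[i] y ∈ Icc (P i) (Q i) := by
  obtain ⟨u, v, huv, hall, heq⟩ := chain f hf hmaps P Q hPQ hsub hcov n
  have huv0 : Icc u v ⊆ Icc (P 0) (Q 0) := by
    have h00 := hall 0 (Nat.zero_le n)
    rwa [Function.iterate_zero, Set.image_id] at h00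
  have huvab : Icc u v ⊆ Icc a b := huv0.trans (hsub 0)
  have hcont : ContinuousOn f^[n] (Icc u v) := ((contIter f hf hmaps n).1).mono huvab
  have him : Icc u v ⊆ f^[n] '' Icc u v := by
    rw [heq, hP, hQ]
    exact huv0
  obtain ⟨y, hy, hfix⟩ := fixlem f^[n] huv hcont him
  exact ⟨y, hfix, fun i hi => hall i hi (Set.mem_image_of_mem _ hy)⟩

/-- If J, K are closed subintervals of I with f(J) ⊇ K ∪ J and f(K) ⊇ J, then
for every even n ≥ 2 there is a point y with f^n(y) = y whose itinerary
alternates between J and K; in particular, if J and K have disjoint interiors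
and intersect in at most one point which is not periodic of period dividing n,
then f has a periodic point of least period n for every even n. -/
theorem stmt_18 (a b : ℝ) (hab : a ≤ b) (f : ℝ → ℝ)
    (hf : ContinuousOn f (Set.Icc a b))
    (hmaps : Set.MapsTo f (Set.Icc a b) (Set.Icc a b))
    (c₁ c₂ d₁ d₂ : ℝ) (hc : c₁ ≤ c₂) (hd : d₁ ≤ d₂)
    (hJ : Set.Icc c₁ c₂ ⊆ Set.Icc a b) (hK : Set.Icc d₁ d₂ ⊆ Set.Icc a b)
    (hfJ : Set.Icc d₁ d₂ ∪ Set.Icc c₁ c₂ ⊆ f '' Set.Icc c₁ c₂)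
    (hfK : Set.Icc c₁ c₂ ⊆ f '' Set.Icc d₁ d₂) :
    (∀ n : ℕ, Even n → 2 ≤ n →
      ∃ y, f^[n] y = y ∧
        ∀ i < n, f^[i] y ∈ (if Even i then Set.Icc c₁ c₂ else Set.Icc d₁ d₂)) ∧
    ((Disjoint (interior (Set.Icc c₁ c₂)) (interior (Set.Icc d₁ d₂)) ∧
        (Set.Icc c₁ c₂ ∩ Set.Icc d₁ d₂).Subsingleton) →
      ∀ n : ℕ, Even n → 2 ≤ n →
        (∀ p ∈ Set.Icc c₁ c₂ ∩ Set.Icc d₁ d₂,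
          ∀ d : ℕ, 0 < d → d ∣ n → f^[d] p ≠ p) →
        ∃ y ∈ Set.Icc a b, f^[n] y = y ∧
          ∀ i, 0 < i → i < n → f^[i] y ≠ y) := by
  constructor
  · intro n hn hn2
    set P : ℕ → ℝ := fun i => if Even i then c₁ else d₁ with hPdef
    set Q : ℕ → ℝ := fun i => if Even i then c₂ else d₂ with hQdef
    have hPQ : ∀ i, P i ≤ Q i := fun i => by by_cases h : Even i <;> simp [hPdef, hQdef, h, hc, hd]
    have hsub : ∀ i, Icc (P i) (Q i) ⊆ Icc a b := fun i => by
      by_cases h : Even i <;> simp only [hPdef, hQdef, h, if_true, if_false] <;>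
        [exact hJ; exact hK]
    have hcov : ∀ i, Icc (P (i + 1)) (Q (i + 1)) ⊆ f '' Icc (P i) (Q i) := by
      intro i
      by_cases h : Even i
      · have h1 : ¬ Even (i + 1) := by simp [Nat.even_add_one, h]
        simp only [hPdef, hQdef, h, h1, if_true, if_false]
        exact fun x hx => hfJ (Or.inl hx)
      · have h1 : Even (i + 1) := Nat.even_add_one.2 h
        simp only [hPdef, hQdef, h, h1, if_true, if_false]
        exact hfK
    obtain ⟨y, hfix, hit⟩ := cycle f hf hmaps P Q hPQ hsub hcov n
      (by simp [hPdef, hn]) (by simp [hQdef, hn])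
    refine ⟨y, hfix, fun i hi => ?_⟩
    have := hit i hi.le
    by_cases h : Even i <;> simpa [hPdef, hQdef, h] using this
  · rintro ⟨-, -⟩ n hn hn2 hper
    set P : ℕ → ℝ := fun i => if i = 1 then d₁ else c₁ with hPdef
    set Q : ℕ → ℝ := fun i => if i = 1 then d₂ else c₂ with hQdef
    have hPQ : ∀ i, P i ≤ Q i := fun i => by by_cases h : i = 1 <;> simp [hPdef, hQdef, h, hc, hd]
    have hsub : ∀ i, Icc (P i) (Q i) ⊆ Icc a b := fun i => by
      by_cases h : i = 1 <;> simp only [hPdef, hQdef, h, if_true, if_false] <;>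
        [exact hK; exact hJ]
    have hcov : ∀ i, Icc (P (i + 1)) (Q (i + 1)) ⊆ f '' Icc (P i) (Q i) := by
      intro i
      rcases Nat.eq_zero_or_pos i with h0 | hpos
      · subst h0
        simp only [hPdef, hQdef]
        norm_num
        exact fun x hx => hfJ (Or.inl hx)
      · by_cases h : i = 1
        · subst h
          simp only [hPdef, hQdef]
          norm_num
          exact hfK
        · have h1 : i + 1 ≠ 1 := by omega
          simp only [hPdef, hQdef, h, h1, if_false]
          exact fun x hx => hfJ (Or.inr hx)
    have hn1 : n ≠ 1 := by omega
    obtain ⟨y, hfix, hit⟩ := cycle f hf hmaps P Q hPQ hsub hcov n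
      (by simp [hPdef, hn1]) (by simp [hQdef, hn1])
    have hitJ : ∀ i ≤ n, i ≠ 1 → f^[i] y ∈ Icc c₁ c₂ := by
      intro i hi h1
      have := hit i hi
      simpa [hPdef, hQdef, h1] using this
    have hyJ : y ∈ Icc c₁ c₂ := by simpa using hitJ 0 (by omega) (by omega)
    have hfyK : f y ∈ Icc d₁ d₂ := by simpa [hPdef, hQdef] using hit 1 (by omega)
    refine ⟨y, hJ hyJ, hfix, ?_⟩
    intro i hi0 hin hieq
    have hpn : Function.IsPeriodicPt f n y := hfix
    have hpi : Function.IsPeriodicPt f i y := hieq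
    set m := Function.minimalPeriod f y with hm
    have hmn : m ∣ n := hpn.minimalPeriod_dvd
    have hmi : m ∣ i := hpi.minimalPeriod_dvd
    have hmpos : 0 < m := hpn.minimalPeriod_pos (by omega)
    have hmlt : m < n := lt_of_le_of_lt (Nat.le_of_dvd hi0 hmi) hin
    have hkey : f^[m] y = y := Function.isPeriodicPt_minimalPeriod f y
    have hfym : f^[m] (f y) = f y := by
      rw [← Function.iterate_succ_apply, Function.iterate_succ_apply', hkey]
    rcases eq_or_lt_of_le (Nat.one_le_iff_ne_zero.2 hmpos.ne') with h1 | h2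
    · -- m = 1 : f y = y
      have hfy : f y = y := by
        have hk1 := hkey
        rw [← h1] at hk1
        simpa using hk1
      have : f y ∈ Icc c₁ c₂ ∩ Icc d₁ d₂ := ⟨by rw [hfy]; exact hyJ, hfyK⟩
      exact hper (f y) this 1 one_pos (one_dvd n) (by simp [hfy])
    · -- 2 ≤ m
      have hm1 : m + 1 ≤ n := by
        obtain ⟨k, hk⟩ := hmn
        have hk2 : 2 ≤ k := by nlinarith
        nlinarith
      have hfyJ : f y ∈ Icc c₁ c₂ := by
        have := hitJ (m + 1) hm1 (by omega)
        rwa [Function.iterate_succ_apply, hfym] at this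
      exact hper (f y) ⟨hfyJ, hfyK⟩ m hmpos hmn hfym
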